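/- The dual of a GRS code is a GRS code: GRS_{n,k}(alpha,beta)^perp = GRS_{n,n-k}(alpha,gamma), where gamma_i = beta_i^{-1} * prod_{j != i} (alpha_i - alpha_j)^{-1}. -/

import Mathlib

open Polynomial Finset

/-- The evaluation map `f ↦ (β₁ f(α₁), …, βₙ f(αₙ))` as a linear map. -/
noncomputable def grsEval {F : Type*} [Field F] {n : ℕ} (α β : Fin n → F) :
    F[X] →ₗ[F] (Fin n → F) where
  toFun f := fun i => β i * f.eval (α i)
  map_add' f g := by funext i; simp [mul_add]
  map_smul' c f := by funext i; simp [smul_eq_mul]; ring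

/-- The generalized Reed–Solomon code `GRS_{n,k}(α,β)`. -/
noncomputable def GRSCode {F : Type*} [Field F] {n : ℕ} (α β : Fin n → F) (k : ℕ) :
    Submodule F (Fin n → F) :=
  Submodule.map (grsEval α β) (Polynomial.degreeLT F k)

noncomputable def dotForm (F : Type*) [Field F] (n : ℕ) :
    LinearMap.BilinForm F (Fin n → F) :=
  LinearMap.mk₂ F (fun x y => ∑ i, x i * y i)
    (fun x x' y => by simp [add_mul, Finset.sum_add_distrib])
    (fun c x y => by simp [Finset.mul_sum, mul_assoc])
    (fun x y y' => by simp [mul_add, Finset.sum_add_distrib])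
    (fun c x y => by simp [Finset.mul_sum, mul_left_comm])

lemma dotForm_apply {F : Type*} [Field F] {n : ℕ} (x y : Fin n → F) :
    dotForm F n x y = ∑ i, x i * y i := rfl

lemma dotForm_refl (F : Type*) [Field F] (n : ℕ) : (dotForm F n).IsRefl := by
  intro x y h
  simpa [dotForm_apply, mul_comm] using h

lemma dotForm_nondeg (F : Type*) [Field F] (n : ℕ) : (dotForm F n).Nondegenerate := by
  refine ⟨fun x hx => ?_, fun x hx => ?_⟩
  · funext i
    simpa [dotForm_apply, Pi.single_apply] using hx (Pi.single i 1)
  · funext i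
    simpa [dotForm_apply, Pi.single_apply] using hx (Pi.single i 1)

/-- key coefficient identity -/
lemma coeff_eq_sum_nodalWeight {F : Type*} [Field F] {n : ℕ} (hn : 0 < n)
    (α : Fin n → F) (hα : Function.Injective α) (h : F[X]) (hdeg : h.degree < n) :
    h.coeff (n - 1) = ∑ i, Lagrange.nodalWeight Finset.univ α i * h.eval (α i) := by
  have hcard : #(Finset.univ : Finset (Fin n)) = n := by simp
  have hinj : Set.InjOn α (Finset.univ : Finset (Fin n)) := hα.injOn
  have hh := Lagrange.eq_interpolate hinj (by rw [hcard]; exact hdeg)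
  conv_lhs => rw [hh]
  rw [Lagrange.interpolate_apply, finset_sum_coeff]
  refine Finset.sum_congr rfl fun i _ => ?_
  rw [coeff_C_mul]
  have hb : Lagrange.basis Finset.univ α i =
      C (Lagrange.nodalWeight Finset.univ α i) * Lagrange.nodal (Finset.univ.erase i) α := by
    rw [Lagrange.basis_eq_prod_sub_inv_mul_nodal_div (Finset.mem_univ i),
      ← Lagrange.nodal_erase_eq_nodal_div (Finset.mem_univ i)]
  rw [hb, coeff_C_mul]
  have hmon : (Lagrange.nodal (Finset.univ.erase i) α).Monic := Lagrange.nodal_monic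
  have hnd : (Lagrange.nodal (Finset.univ.erase i) α).natDegree = n - 1 := by
    rw [Lagrange.natDegree_nodal, Finset.card_erase_of_mem (Finset.mem_univ i), hcard]
  rw [← hnd, hmon.coeff_natDegree]
  ring

lemma finrank_GRS {F : Type*} [Field F] {n : ℕ} (α β : Fin n → F)
    (hα : Function.Injective α) (hβ : ∀ i, β i ≠ 0) (m : ℕ) (hm : m ≤ n) :
    Module.finrank F (GRSCode α β m) = m := by
  have hmap : GRSCode α β m =
      LinearMap.range ((grsEval α β).comp (Polynomial.degreeLT F m).subtype) := by
    rw [LinearMap.range_comp, Submodule.range_subtype]; rfl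
  have hinj : Function.Injective ((grsEval α β).comp (Polynomial.degreeLT F m).subtype) := by
    rw [← LinearMap.ker_eq_bot, LinearMap.ker_eq_bot']
    rintro ⟨f, hf⟩ hf0
    have heval : ∀ i ∈ (Finset.univ : Finset (Fin n)), f.eval (α i) = 0 := by
      intro i _
      have := congrFun hf0 i
      simp only [LinearMap.comp_apply, Submodule.subtype_apply, grsEval] at this
      exact (mul_eq_zero.mp this).resolve_left (hβ i)
    have hdeg : f.degree < (#(Finset.univ : Finset (Fin n)) : WithBot ℕ) := by
      simp only [Finset.card_univ, Fintype.card_fin]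
      exact lt_of_lt_of_le (Polynomial.mem_degreeLT.mp hf) (by exact_mod_cast hm)
    have := Polynomial.eq_zero_of_degree_lt_of_eval_index_eq_zero Finset.univ hα.injOn hdeg heval
    exact Subtype.ext this
  rw [hmap, LinearMap.finrank_range_of_inj hinj]
  have := (Polynomial.degreeLTEquiv F m).finrank_eq
  rw [this, Module.finrank_fin_fun]

lemma grs_le_orthogonal {F : Type*} [Field F] {n k : ℕ} (hk1 : 1 ≤ k) (hkn : k ≤ n)
    (α β : Fin n → F) (hα : Function.Injective α) (hβ : ∀ i, β i ≠ 0) :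
    GRSCode α (fun i => (β i)⁻¹ * (∏ j ∈ Finset.univ.erase i, (α i - α j))⁻¹) (n - k) ≤
      (dotForm F n).orthogonal (GRSCode α β k) := by
  rintro x ⟨g, hg, rfl⟩ y ⟨f, hf, rfl⟩
  have hn : 0 < n := lt_of_lt_of_le hk1 hkn
  rw [dotForm_apply]
  have hstep : ∀ i : Fin n,
      (grsEval α β) f i *
        (grsEval α (fun i => (β i)⁻¹ * (∏ j ∈ Finset.univ.erase i, (α i - α j))⁻¹)) g i =
      Lagrange.nodalWeight Finset.univ α i * (f * g).eval (α i) := by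
    intro i
    simp only [grsEval, LinearMap.coe_mk, AddHom.coe_mk, Lagrange.nodalWeight, eval_mul,
      Finset.prod_inv_distrib]
    field_simp
    rw [mul_assoc, mul_div_mul_left _ _ (hβ i)]
  simp only [hstep]
  have hfg : (f * g).degree < (n : WithBot ℕ) ∧ (f * g).coeff (n - 1) = 0 := by
    rcases eq_or_ne f 0 with rfl | hf0
    · refine ⟨?_, by simp⟩
      simp only [zero_mul, Polynomial.degree_zero]
      exact WithBot.bot_lt_coe _
    rcases eq_or_ne g 0 with rfl | hg0
    · refine ⟨?_, by simp⟩
      simp only [mul_zero, Polynomial.degree_zero]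
      exact WithBot.bot_lt_coe _
    have hdf : f.natDegree ≤ k - 1 := by
      have := Polynomial.mem_degreeLT.mp hf
      rw [Polynomial.degree_eq_natDegree hf0] at this
      exact_mod_cast Nat.le_sub_one_of_lt (by exact_mod_cast this)
    have hdg : g.natDegree ≤ n - k - 1 := by
      have := Polynomial.mem_degreeLT.mp hg
      rw [Polynomial.degree_eq_natDegree hg0] at this
      exact_mod_cast Nat.le_sub_one_of_lt (by exact_mod_cast this)
    have hnk : 1 ≤ n - k := by
      rcases Nat.eq_zero_or_pos (n - k) with h0 | h1
      · exfalso
        have hdg' := Polynomial.mem_degreeLT.mp hg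
        rw [h0, Nat.cast_zero] at hdg'
        exact hg0 (Polynomial.degree_eq_bot.mp (Nat.WithBot.lt_zero_iff.mp hdg'))
      · exact h1
    have hnd : (f * g).natDegree ≤ n - 2 := by
      calc (f * g).natDegree ≤ f.natDegree + g.natDegree := Polynomial.natDegree_mul_le
        _ ≤ (k - 1) + (n - k - 1) := add_le_add hdf hdg
        _ ≤ n - 2 := by omega
    constructor
    · rw [Polynomial.degree_eq_natDegree (mul_ne_zero hf0 hg0)]
      exact_mod_cast lt_of_le_of_lt hnd (by omega)
    · exact Polynomial.coeff_eq_zero_of_natDegree_lt (lt_of_le_of_lt hnd (by omega))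
  rw [← coeff_eq_sum_nodalWeight hn α hα (f * g) hfg.1]
  exact hfg.2

/-- The dual of a GRS code is a GRS code:
`GRS_{n,k}(α,β)^⊥ = GRS_{n,n-k}(α,γ)` with `γᵢ = βᵢ⁻¹ ∏_{j≠i} (αᵢ - αⱼ)⁻¹`. -/
theorem GRS_dual (q n k : ℕ) (F : Type*) [Field F] [Fintype F]
    (hq : Fintype.card F = q) (hk1 : 1 ≤ k) (hkn : k ≤ n) (hnq : n ≤ q)
    (α β : Fin n → F) (hα : Function.Injective α) (hβ : ∀ i, β i ≠ 0) :
    {x : Fin n → F | ∀ y ∈ GRSCode α β k, ∑ i, x i * y i = 0} =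
      ↑(GRSCode α
          (fun i => (β i)⁻¹ * (∏ j ∈ Finset.univ.erase i, (α i - α j))⁻¹) (n - k)) := by
  set γ : Fin n → F := fun i => (β i)⁻¹ * (∏ j ∈ Finset.univ.erase i, (α i - α j))⁻¹ with hγ
  have hγ0 : ∀ i, γ i ≠ 0 := by
    intro i
    refine mul_ne_zero (inv_ne_zero (hβ i)) (inv_ne_zero (Finset.prod_ne_zero_iff.mpr ?_))
    intro j hj
    exact sub_ne_zero_of_ne fun h => (Finset.mem_erase.mp hj).1 (hα h).symm
  have hle : GRSCode α γ (n - k) ≤ (dotForm F n).orthogonal (GRSCode α β k) :=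
    grs_le_orthogonal hk1 hkn α β hα hβ
  have hrank : Module.finrank F ((dotForm F n).orthogonal (GRSCode α β k)) ≤
      Module.finrank F (GRSCode α γ (n - k)) := by
    rw [LinearMap.BilinForm.finrank_orthogonal (dotForm_nondeg F n),
      finrank_GRS α β hα hβ k hkn, finrank_GRS α γ hα hγ0 (n - k) (Nat.sub_le n k),
      Module.finrank_fin_fun]
  have heq : GRSCode α γ (n - k) = (dotForm F n).orthogonal (GRSCode α β k) :=
    Submodule.eq_of_le_of_finrank_le hle hrank
  rw [heq]
  ext x
  simp only [Set.mem_setOf_eq, SetLike.mem_coe,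
    LinearMap.BilinForm.mem_orthogonal_iff, LinearMap.BilinForm.isOrtho_def, dotForm_apply]
  constructor
  · intro hx y hy
    simpa [mul_comm] using hx y hy
  · intro hx y hy
    simpa [mul_comm] using hx y hy
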